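/- Let G be a group generated by finitely many elements g_1, ..., g_m, let C be an abelian normal subgroup of G with B = G/C nontrivial, and suppose the group ring ZB is an Ore domain and C, viewed as a ZB-module, has no torsion. Then G embeds into a wreath product A_n ≀ B, where A_n is a free abelian group of rank n and n is the rank of the module D of a splitting of G over C. -/

import Mathlib

/-!
STATEMENT 10 (Lemma 3, part 2): Under the hypotheses of Lemma 3 (`G` finitely
generated, `C` abelian normal, `B = G/C ≠ 1`, `ℤB` an Ore domain, `C` torsion-free as a
`ℤB`-module), `G` embeds into the wreath product `A_n ≀ B` of a free abelian group of
rank `n` with `B`, where `n = rank D` for a splitting `(D, d, σ)` of `G` over `C`.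
The wreath product `A_n ≀ B` is the matrix group `[[B, 0], [T, 1]]` with `T` the free
right `ℤB`-module of rank `n` (realized as `Fin n → ℤB`); a homomorphism of `G` into it
is a pair `(β, t)` of a homomorphism `β : G →* B` and a 1-cocycle `t`, and an embedding
is such a pair with `g ↦ (β g, t g)` injective.
-/

section AuxDep

variable {A : Type} [Ring A] [Nontrivial A] [NoZeroDivisors A]
  {M : Type} [AddCommGroup M] [Module A M]

theorem aux_dep
    (ore : ∀ a b : A, a ≠ 0 → b ≠ 0 → ∃ x y : A, x * a = y * b ∧ x * a ≠ 0) :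
    ∀ (m : ℕ) (w : Fin m → M) (x : Fin (m + 1) → M),
      (∀ i, x i ∈ Submodule.span A (Set.range w)) →
      ∃ c : Fin (m + 1) → A, (∃ i, c i ≠ 0) ∧ ∑ i, c i • x i = 0 := by
  intro m
  induction m with
  | zero =>
    intro w x hx
    refine ⟨fun _ => 1, ⟨0, one_ne_zero⟩, ?_⟩
    have h0 : x 0 = 0 := by
      have := hx 0
      rw [Set.range_eq_empty w, Submodule.span_empty, Submodule.mem_bot] at this
      exact this
    rw [Fin.sum_univ_one, h0, smul_zero]
  | succ m IH =>
    intro w x hx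
    have hrep : ∀ i, ∃ f : Fin (m + 1) → A, ∑ j, f j • w j = x i := fun i =>
      (Submodule.mem_span_range_iff_exists_fun A).mp (hx i)
    choose rep hrepr using hrep
    set a : Fin (m + 2) → A := fun i => rep i 0 with ha
    have hz : ∀ i, x i - a i • w 0 ∈ Submodule.span A (Set.range (w ∘ Fin.succ)) := by
      intro i
      have h1 : x i - a i • w 0 = ∑ j : Fin m, rep i j.succ • w j.succ := by
        rw [← hrepr i, Fin.sum_univ_succ]
        abel
      rw [h1]
      exact Submodule.sum_mem _ fun j _ =>
        Submodule.smul_mem _ _ (Submodule.subset_span ⟨j, rfl⟩)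
    by_cases hall : ∀ i, a i = 0
    · have hx' : ∀ i : Fin (m + 1),
          x i.castSucc ∈ Submodule.span A (Set.range (w ∘ Fin.succ)) := by
        intro i
        have h2 := hz i.castSucc
        rw [hall, zero_smul, sub_zero] at h2
        exact h2
      obtain ⟨c', ⟨i0, hi0⟩, hc'⟩ := IH (w ∘ Fin.succ) (fun i => x i.castSucc) hx'
      refine ⟨Fin.snoc c' 0, ⟨i0.castSucc, by simpa using hi0⟩, ?_⟩
      rw [Fin.sum_univ_castSucc]
      simpa using hc'
    · push_neg at hall
      obtain ⟨i0, hi0⟩ := hall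
      have helim : ∀ i : Fin (m + 1), ∃ u v : A, u ≠ 0 ∧ u * a (i0.succAbove i) = v * a i0 := by
        intro i
        by_cases h : a (i0.succAbove i) = 0
        · exact ⟨1, 0, one_ne_zero, by rw [h, mul_zero, zero_mul]⟩
        · obtain ⟨u, v, huv, hne⟩ := ore _ _ h hi0
          exact ⟨u, v, left_ne_zero_of_mul hne, huv⟩
      choose u v hu huv using helim
      set y : Fin (m + 1) → M := fun i => u i • x (i0.succAbove i) - v i • x i0 with hy
      have hys : ∀ i, y i ∈ Submodule.span A (Set.range (w ∘ Fin.succ)) := by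
        intro i
        have e1 : y i = u i • (x (i0.succAbove i) - a (i0.succAbove i) • w 0)
            - v i • (x i0 - a i0 • w 0) := by
          simp only [hy, smul_sub, smul_smul, huv i]
          abel
        rw [e1]
        exact Submodule.sub_mem _ (Submodule.smul_mem _ _ (hz _)) (Submodule.smul_mem _ _ (hz _))
      obtain ⟨c', ⟨i1, hi1⟩, hc'⟩ := IH (w ∘ Fin.succ) y hys
      refine ⟨i0.insertNth (-(∑ i, c' i * v i)) (fun i => c' i * u i),
        ⟨i0.succAbove i1, ?_⟩, ?_⟩
      · rw [Fin.insertNth_apply_succAbove]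
        exact mul_ne_zero hi1 (hu i1)
      · rw [Fin.sum_univ_succAbove _ i0]
        simp only [Fin.insertNth_apply_same, Fin.insertNth_apply_succAbove]
        have h2 : ∑ i, (c' i * u i) • x (i0.succAbove i) - (∑ i, c' i * v i) • x i0 = 0 := by
          rw [Finset.sum_smul, ← Finset.sum_sub_distrib, ← hc']
          exact Finset.sum_congr rfl fun i _ => by simp [hy, smul_sub, smul_smul]
        rw [sub_eq_zero] at h2
        rw [neg_smul, ← h2]
        exact neg_add_cancel _

theorem aux_bound
    (ore : ∀ a b : A, a ≠ 0 → b ≠ 0 → ∃ x y : A, x * a = y * b ∧ x * a ≠ 0)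
    {m k : ℕ} (w : Fin m → M) (hw : Submodule.span A (Set.range w) = ⊤)
    (v : Fin k → M) (hv : LinearIndependent A v) : k ≤ m := by
  by_contra hc
  push_neg at hc
  have hle : m + 1 ≤ k := hc
  obtain ⟨c, ⟨i, hi⟩, hsum⟩ := aux_dep ore m w (v ∘ Fin.castLE hle)
    (fun i => by rw [hw]; trivial)
  exact hi (Fintype.linearIndependent_iff.mp
    (hv.comp _ (Fin.castLE_injective hle)) c hsum i)

theorem aux_rank
    (ore : ∀ a b : A, a ≠ 0 → b ≠ 0 → ∃ x y : A, x * a = y * b ∧ x * a ≠ 0)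
    {m : ℕ} (w : Fin m → M) (hw : Submodule.span A (Set.range w) = ⊤) :
    ∃ n : ℕ, (n : Cardinal) = Module.rank A M ∧ ∃ e : Fin n → M, LinearIndependent A e ∧
      ∀ x : M, ∃ a : A, a ≠ 0 ∧ a • x ∈ Submodule.span A (Set.range e) := by
  classical
  set S : Set ℕ := {k | ∃ v : Fin k → M, LinearIndependent A v} with hS
  have h0 : (0 : ℕ) ∈ S := ⟨fun i => i.elim0, linearIndependent_empty_type⟩
  have hbdd : BddAbove S := ⟨m, fun k ⟨v, hv⟩ => aux_bound ore w hw v hv⟩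
  set n := sSup S with hn
  obtain ⟨e, he⟩ : n ∈ S := Nat.sSup_mem ⟨0, h0⟩ hbdd
  have hmax : ∀ k ∈ S, k ≤ n := fun k hk => le_csSup hbdd hk
  refine ⟨n, ?_, e, he, ?_⟩
  · apply le_antisymm
    · have := he.cardinal_le_rank
      rwa [Cardinal.mk_fin] at this
    · apply rank_le
      intro s hs
      apply Nat.cast_le.mpr
      apply hmax
      exact ⟨(fun i : Fin s.card => (s.equivFin.symm i : M)),
        hs.comp s.equivFin.symm s.equivFin.symm.injective⟩
  · intro x
    have hnotind : ¬ LinearIndependent A (Fin.cons x e : Fin (n + 1) → M) := by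
      intro hind
      have h3 : n + 1 ∈ S := ⟨_, hind⟩
      have h4 := hmax _ h3
      omega
    obtain ⟨c, hsum, i, hi⟩ := Fintype.not_linearIndependent_iff.mp hnotind
    rw [Fin.sum_univ_succ] at hsum
    simp only [Fin.cons_zero, Fin.cons_succ] at hsum
    by_cases hc0 : c 0 = 0
    · exfalso
      rw [hc0, zero_smul, zero_add] at hsum
      have hz := Fintype.linearIndependent_iff.mp he _ hsum
      rcases Fin.eq_zero_or_eq_succ i with rfl | ⟨j, rfl⟩
      · exact hi hc0
      · exact hi (hz j)
    · refine ⟨c 0, hc0, ?_⟩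
      have : c 0 • x = -∑ j : Fin n, c j.succ • e j :=
        eq_neg_of_add_eq_zero_left hsum
      rw [this]
      exact Submodule.neg_mem _ (Submodule.sum_mem _ fun j _ =>
        Submodule.smul_mem _ _ (Submodule.subset_span ⟨j, rfl⟩))

omit [NoZeroDivisors A] in
theorem aux_crm
    (ore : ∀ a b : A, a ≠ 0 → b ≠ 0 → ∃ x y : A, a * x = b * y ∧ a * x ≠ 0) :
    ∀ l : List A, (∀ a ∈ l, a ≠ 0) → ∃ N : A, N ≠ 0 ∧ ∀ a ∈ l, ∃ z, a * z = N := by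
  intro l
  induction l with
  | nil => exact fun _ => ⟨1, one_ne_zero, fun a ha => absurd ha List.not_mem_nil⟩
  | cons b l IH =>
    intro hl
    obtain ⟨N, hN, hdvd⟩ := IH fun a ha => hl a (List.mem_cons_of_mem _ ha)
    have hb : b ≠ 0 := hl b List.mem_cons_self
    obtain ⟨x, y, hxy, hne⟩ := ore b N hb hN
    refine ⟨b * x, hne, fun a ha => ?_⟩
    rcases List.mem_cons.mp ha with rfl | ha
    · exact ⟨x, rfl⟩
    · obtain ⟨z, hz⟩ := hdvd a ha
      exact ⟨z * y, by rw [← mul_assoc, hz, hxy]⟩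

end AuxDep
open scoped nonZeroDivisors

section AuxEmbed
variable {A : Type} [Ring A] [Nontrivial A] [NoZeroDivisors A]
  {M : Type} [AddCommGroup M] [Module A M]

theorem aux_frac {Q : Type} [DivisionRing Q] (j : A →+* Q)
    (hjz : ∀ a : A, a ≠ 0 → j a ≠ 0)
    (p b c : A) (hp : p ≠ 0) :
    (j (p * b))⁻¹ * j (p * c) = (j b)⁻¹ * j c := by
  rw [map_mul, map_mul, mul_inv_rev, mul_assoc, ← mul_assoc ((j p)⁻¹),
    inv_mul_cancel₀ (hjz p hp), one_mul]

theorem aux_embed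
    (oreL : ∀ a b : A, a ≠ 0 → b ≠ 0 → ∃ x y : A, x * a = y * b ∧ x * a ≠ 0)
    (oreR : ∀ a b : A, a ≠ 0 → b ≠ 0 → ∃ x y : A, a * x = b * y ∧ a * x ≠ 0)
    (tf : ∀ (a : A) (x : M), a ≠ 0 → a • x = 0 → x = 0)
    {m : ℕ} (w : Fin m → M) (hw : Submodule.span A (Set.range w) = ⊤) :
    ∃ n : ℕ, (n : Cardinal) = Module.rank A M ∧
      ∃ ι : M → Fin n → A, (∀ x y, ι (x + y) = ι x + ι y) ∧
        (∀ (a : A) (x : M) (i : Fin n), ι (a • x) i = a * ι x i) ∧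
        Function.Injective ι := by
  classical
  obtain ⟨n, hrank, e, he, htor⟩ := aux_rank oreL w hw
  set E := Submodule.span A (Set.range e) with hE
  -- coordinates on E
  have coord_ex : ∀ y : M, y ∈ E → ∃ c : Fin n → A, ∑ i, c i • e i = y := fun y hy =>
    (Submodule.mem_span_range_iff_exists_fun A).mp hy
  set coord : M → Fin n → A := fun y => if hy : y ∈ E then (coord_ex y hy).choose else 0
    with hcoord
  have coord_spec : ∀ y ∈ E, ∑ i, coord y i • e i = y := by
    intro y hy
    rw [hcoord]
    simp only [dif_pos hy]
    exact (coord_ex y hy).choose_spec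
  have coord_unique : ∀ (y : M) (c : Fin n → A), ∑ i, c i • e i = y → coord y = c := by
    intro y c hc
    have hy : y ∈ E := by
      rw [← hc]
      exact Submodule.sum_mem _ fun i _ =>
        Submodule.smul_mem _ _ (Submodule.subset_span ⟨i, rfl⟩)
    have h2 := coord_spec y hy
    funext i
    have h3 : ∑ j, (coord y j - c j) • e j = 0 := by
      rw [Finset.sum_congr rfl fun j _ => sub_smul (coord y j) (c j) (e j),
        Finset.sum_sub_distrib, h2, hc, sub_self]
    have h4 := Fintype.linearIndependent_iff.mp he _ h3 i
    exact sub_eq_zero.mp h4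
  have coord_smul : ∀ (p : A) (y : M), y ∈ E → coord (p • y) = fun i => p * coord y i := by
    intro p y hy
    apply coord_unique
    rw [Finset.sum_congr rfl fun i _ => (smul_smul p (coord y i) (e i)).symm,
      ← Finset.smul_sum, coord_spec y hy]
  have coord_add : ∀ y z : M, y ∈ E → z ∈ E → coord (y + z) = coord y + coord z := by
    intro y z hy hz
    apply coord_unique
    simp only [Pi.add_apply]
    rw [Finset.sum_congr rfl fun i _ => add_smul (coord y i) (coord z i) (e i),
      Finset.sum_add_distrib, coord_spec y hy, coord_spec z hz]
  have coord_zero : coord 0 = 0 := coord_unique 0 0 (by simp)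
  -- the division ring of fractions
  letI : OreLocalization.OreSet A⁰ := by
    refine (OreLocalization.nonempty_oreSet_iff_of_noZeroDivisors.mpr ?_).some
    intro r s
    by_cases hr : r = 0
    · exact ⟨0, 1, by simp [hr]⟩
    · obtain ⟨x, y, hxy, hne⟩ := oreL r s hr (nonZeroDivisors.ne_zero s.2)
      exact ⟨y, ⟨x, mem_nonZeroDivisors_of_ne_zero (left_ne_zero_of_mul hne)⟩, hxy⟩
  set Q := OreLocalization A⁰ A with hQ
  letI : DivisionRing Q := inferInstanceAs (DivisionRing (OreLocalization A⁰ A))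
  set j : A →+* Q := OreLocalization.numeratorRingHom with hj
  have hjinj : Function.Injective j := by
    have h5 : Function.Injective (OreLocalization.numeratorHom : A → Q) := by
      apply OreLocalization.numeratorHom_inj
      · intro x hx
        rw [mem_nonZeroDivisorsLeft_iff]
        intro y hy
        rcases mul_eq_zero.mp hy with h | h
        · exact absurd h (nonZeroDivisors.ne_zero hx)
        · exact h
    exact h5
  have hjz : ∀ a : A, a ≠ 0 → j a ≠ 0 := by
    intro a ha h
    exact ha (hjinj (h.trans (map_zero j).symm))
  -- denominators
    -- den x • x ∈ E with den x ≠ 0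
  set den : M → A := fun x => (htor x).choose with hden
  have hden0 : ∀ x, den x ≠ 0 := fun x => (htor x).choose_spec.1
  have hdenE : ∀ x, den x • x ∈ E := fun x => (htor x).choose_spec.2
  set ψ : M → Fin n → Q := fun x i => (j (den x))⁻¹ * j (coord (den x • x) i) with hψ
  have key : ∀ (x : M) (a : A), a ≠ 0 → a • x ∈ E →
      ∀ i, ψ x i = (j a)⁻¹ * j (coord (a • x) i) := by
    intro x a ha haE i
    obtain ⟨p, q, hpq, hne⟩ := oreL (den x) a (hden0 x) ha
    have hp : p ≠ 0 := left_ne_zero_of_mul hne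
    have hq : q ≠ 0 := by
      intro h
      rw [h, zero_mul] at hpq
      exact hne hpq
    have e1 : p * coord (den x • x) i = q * coord (a • x) i := by
      have h1 : coord ((p * den x) • x) = fun i => p * coord (den x • x) i := by
        rw [mul_smul]; exact coord_smul p _ (hdenE x)
      have h2 : coord ((q * a) • x) = fun i => q * coord (a • x) i := by
        rw [mul_smul]; exact coord_smul q _ haE
      have h3 : coord ((p * den x) • x) = coord ((q * a) • x) := by rw [hpq]
      have := congrFun (h1.symm.trans (h3.trans h2)) i
      exact this
    calc (j (den x))⁻¹ * j (coord (den x • x) i)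
        = (j (p * den x))⁻¹ * j (p * coord (den x • x) i) :=
          (aux_frac j hjz p (den x) _ hp).symm
      _ = (j (q * a))⁻¹ * j (q * coord (a • x) i) := by rw [hpq, e1]
      _ = (j a)⁻¹ * j (coord (a • x) i) := aux_frac j hjz q a _ hq
  have psi_zero : ψ 0 = 0 := by
    funext i
    have h1 : (1 : A) • (0 : M) ∈ E := by rw [smul_zero]; exact Submodule.zero_mem _
    rw [key 0 1 one_ne_zero h1 i, smul_zero, coord_zero]
    simp
  have psi_add : ∀ x y : M, ψ (x + y) = ψ x + ψ y := by
    intro x y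
    obtain ⟨p, q, hpq, hne⟩ := oreL (den x) (den y) (hden0 x) (hden0 y)
    have hp : p ≠ 0 := left_ne_zero_of_mul hne
    have hq : q ≠ 0 := by
      intro h; rw [h, zero_mul] at hpq; exact hne hpq
    have hsx : (p * den x) • x ∈ E := by
      rw [mul_smul]; exact Submodule.smul_mem _ _ (hdenE x)
    have hsy : (p * den x) • y ∈ E := by
      rw [hpq, mul_smul]; exact Submodule.smul_mem _ _ (hdenE y)
    have hsxy : (p * den x) • (x + y) ∈ E := by
      rw [smul_add]; exact Submodule.add_mem _ hsx hsy
    funext i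
    rw [Pi.add_apply, key (x + y) _ hne hsxy i, key x _ hne hsx i, key y _ hne hsy i,
      smul_add, coord_add _ _ hsx hsy, Pi.add_apply, map_add, mul_add]
  have psi_smul : ∀ (a : A) (x : M) (i : Fin n), ψ (a • x) i = j a * ψ x i := by
    intro a x i
    by_cases ha : a = 0
    · rw [ha, zero_smul, psi_zero]
      simp
    · obtain ⟨p, q, hpq, hne⟩ := oreL a (den x) ha (hden0 x)
      have hp : p ≠ 0 := left_ne_zero_of_mul hne
      have hq : q ≠ 0 := by
        intro h; rw [h, zero_mul] at hpq; exact hne hpq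
      have hpax : p • (a • x) ∈ E := by
        rw [← mul_smul, hpq, mul_smul]
        exact Submodule.smul_mem _ _ (hdenE x)
      rw [key (a • x) p hp hpax i, key x (den x) (hden0 x) (hdenE x) i]
      have e1 : coord (p • (a • x)) i = q * coord (den x • x) i := by
        have h1 : p • (a • x) = q • (den x • x) := by
          rw [← mul_smul, ← mul_smul, hpq]
        rw [h1, coord_smul q _ (hdenE x)]
      rw [e1, map_mul, ← mul_assoc, ← mul_assoc]
      congr 1
      -- (j p)⁻¹ * j q = j a * (j (den x))⁻¹
      apply mul_left_cancel₀ (hjz p hp)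
      rw [← mul_assoc, mul_inv_cancel₀ (hjz p hp), one_mul]
      apply mul_right_cancel₀ (hjz (den x) (hden0 x))
      rw [mul_assoc, mul_assoc, inv_mul_cancel₀ (hjz (den x) (hden0 x)), mul_one,
        ← map_mul, ← map_mul, hpq]
  have psi_injz : ∀ x : M, ψ x = 0 → x = 0 := by
    intro x hx
    have h1 : ∀ i, coord (den x • x) i = 0 := by
      intro i
      have h2 := congrFun hx i
      rw [hψ] at h2
      simp only at h2
      rcases mul_eq_zero.mp h2 with h | h
      · exact absurd h (inv_ne_zero (hjz _ (hden0 x)))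
      · exact hjinj (h.trans (map_zero j).symm)
    have h3 : den x • x = 0 := by
      rw [← coord_spec _ (hdenE x)]
      simp [h1]
    exact tf _ _ (hden0 x) h3
  -- clearing denominators on generators
  have clear : ∀ (k : Fin m) (i : Fin n), ∃ t : A, t ≠ 0 ∧ ∃ uu : A,
      ψ (w k) i * j t = j uu := by
    intro k i
    set b := den (w k)
    set c := coord (b • w k) i with hc
    by_cases hc0 : c = 0
    · refine ⟨1, one_ne_zero, 0, ?_⟩
      rw [key (w k) b (hden0 _) (hdenE _) i, ← hc, hc0]
      simp
    · obtain ⟨t, uu, htu, hne⟩ := oreR c b hc0 (hden0 _)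
      have ht : t ≠ 0 := by
        intro h; rw [h, mul_zero] at hne; exact hne rfl
      refine ⟨t, ht, uu, ?_⟩
      rw [key (w k) b (hden0 _) (hdenE _) i, ← hc, mul_assoc, ← map_mul, htu, map_mul,
        ← mul_assoc, inv_mul_cancel₀ (hjz _ (hden0 _)), one_mul]
  choose tden htne tnum htnum using clear
  have hcrm : ∀ i : Fin n, ∃ N : A, N ≠ 0 ∧ ∀ k : Fin m, ∃ z, tden k i * z = N := by
    intro i
    obtain ⟨N, hN0, hNd⟩ := aux_crm oreR (List.ofFn fun k => tden k i) (by
      intro a ha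
      obtain ⟨k, rfl⟩ := List.mem_ofFn.mp ha
      exact htne _ _)
    refine ⟨N, hN0, fun k => hNd _ (List.mem_ofFn.mpr ⟨k, rfl⟩)⟩
  choose N hN0 hNd using hcrm
  have clearN : ∀ (k : Fin m) (i : Fin n), ∃ uu : A, ψ (w k) i * j (N i) = j uu := by
    intro k i
    obtain ⟨z, hz⟩ := hNd i k
    exact ⟨tnum k i * z, by rw [← hz, map_mul, ← mul_assoc, htnum, ← map_mul]⟩
  have hrange : ∀ (x : M) (i : Fin n), ∃ uu : A, ψ x i * j (N i) = j uu := by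
    intro x
    have hx : x ∈ Submodule.span A (Set.range w) := by rw [hw]; trivial
    induction hx using Submodule.span_induction with
    | mem z hz =>
      obtain ⟨k, rfl⟩ := hz
      exact fun i => clearN k i
    | zero =>
      intro i
      refine ⟨0, ?_⟩
      rw [psi_zero]
      simp
    | add y z _ _ hy hz =>
      intro i
      obtain ⟨u1, hu1⟩ := hy i
      obtain ⟨u2, hu2⟩ := hz i
      refine ⟨u1 + u2, ?_⟩
      rw [psi_add, Pi.add_apply, add_mul, hu1, hu2, map_add]
    | smul a y _ hy =>
      intro i
      obtain ⟨u1, hu1⟩ := hy i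
      refine ⟨a * u1, ?_⟩
      rw [psi_smul, mul_assoc, hu1, map_mul]
  choose ι hι using fun x => fun i => hrange x i
  have psi_eq : ∀ x y : M, ι x = ι y → ψ x = ψ y := by
    intro x y hxy
    funext i
    apply mul_right_cancel₀ (hjz (N i) (hN0 i))
    rw [hι x i, hι y i, hxy]
  have psi_neg : ∀ (y : M) (i : Fin n), ψ (-y) i = -ψ y i := by
    intro y i
    rw [← neg_one_smul A y, psi_smul, map_neg, map_one, neg_one_mul]
  refine ⟨n, hrank, ι, ?_, ?_, ?_⟩
  · intro x y
    funext i
    apply hjinj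
    show j (ι (x + y) i) = j ((ι x + ι y) i)
    rw [Pi.add_apply, map_add, ← hι, ← hι, ← hι, psi_add, Pi.add_apply, add_mul]
  · intro a x i
    apply hjinj
    rw [map_mul, ← hι, ← hι, psi_smul, mul_assoc]
  · intro x y hxy
    have h1 : ψ x = ψ y := psi_eq x y hxy
    have h2 : ψ (x - y) = 0 := by
      funext i
      rw [sub_eq_add_neg, psi_add, Pi.add_apply, psi_neg, h1, Pi.zero_apply,
        add_neg_cancel]
    have := psi_injz _ h2
    exact sub_eq_zero.mp this

end AuxEmbed

/-- The elements of the abelian normal subgroup `C` are torsion-free under the natural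
right `ℤ[G/C]`-module structure given by conjugation, expressed elementwise: a nonzero
group-ring element (representatives `h j` of pairwise distinct cosets mod `C`, integer
coefficients `m j`, not all zero) applied to `c ∈ C` is trivial only if `c` is. -/
def ConjTorsionFree {G : Type*} [Group G] (C : Subgroup G) : Prop :=
  ∀ c ∈ C, ∀ (k : ℕ) (h : Fin k → G) (m : Fin k → ℤ),
    (∀ j l : Fin k, j ≠ l → (h j)⁻¹ * h l ∉ C) → (∃ j, m j ≠ 0) →
    (List.ofFn fun j => ((h j)⁻¹ * c * h j) ^ m j).prod = 1 → c = 1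

/-- `(d, σ)` is a matrix splitting of `G` over `C` with `B = G/C`: the right
`ℤB`-module `D` (a left module over `(ℤB)ᵐᵒᵖ`) together with the injective homomorphism
`λ : g ↦ [[ḡ, 0], [d g, 1]]` into the matrix group `[[B, 0], [D, 1]]`. Injectivity of
`λ` is injectivity of `g ↦ (ḡ, d g)`, and `λ` being a homomorphism is the cocycle
identity `d (g h) = d g • h̄ + d h`. Moreover (1) `D` is generated by the `d g`;
(2) `σ` is a module epimorphism of `D` onto the fundamental (augmentation) ideal
`(B−1)·ℤB = {x | Σ coefficients of x = 0}` with `σ (d g) = ḡ − 1`; (3) `ker σ = d(C)`. -/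
def IsMatrixSplitting {G : Type*} [Group G] (C : Subgroup G) [C.Normal]
    {D : Type*} [AddCommGroup D] [Module (MonoidAlgebra ℤ (G ⧸ C))ᵐᵒᵖ D]
    (d : G → D)
    (σ : D →ₗ[(MonoidAlgebra ℤ (G ⧸ C))ᵐᵒᵖ] MonoidAlgebra ℤ (G ⧸ C)) : Prop :=
  Function.Injective (fun g : G => ((g : G ⧸ C), d g)) ∧
  (∀ g h : G, d (g * h) =
    MulOpposite.op (MonoidAlgebra.of ℤ (G ⧸ C) ((h : G ⧸ C))) • d g + d h) ∧
  Submodule.span (MonoidAlgebra ℤ (G ⧸ C))ᵐᵒᵖ (Set.range d) = ⊤ ∧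
  (∀ g : G, σ (d g) = MonoidAlgebra.of ℤ (G ⧸ C) ((g : G ⧸ C)) - 1) ∧
  Set.range σ = {x : MonoidAlgebra ℤ (G ⧸ C) | (x.coeff.sum fun _ n => n) = 0} ∧
  (∀ x : D, σ x = 0 ↔ x ∈ d '' (C : Set G))

/-- A bundled matrix splitting of `G` over `C`. -/
structure MatrixSplitting (G : Type*) [Group G] (C : Subgroup G) [C.Normal] where
  D : Type
  [instAdd : AddCommGroup D]
  [instMod : Module (MonoidAlgebra ℤ (G ⧸ C))ᵐᵒᵖ D]
  d : G → D
  σ : D →ₗ[(MonoidAlgebra ℤ (G ⧸ C))ᵐᵒᵖ] MonoidAlgebra ℤ (G ⧸ C)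
  isSplitting : IsMatrixSplitting C d σ

/-- `R` is a (two-sided) Ore domain: a domain satisfying the right and left Ore
conditions. -/
def IsOreDomain (R : Type*) [Ring R] : Prop :=
  (∀ a b : R, a * b = 0 → a = 0 ∨ b = 0) ∧
  (∀ a b : R, a ≠ 0 → b ≠ 0 → ∃ x y : R, a * x = b * y ∧ a * x ≠ 0) ∧
  (∀ a b : R, a ≠ 0 → b ≠ 0 → ∃ x y : R, x * a = y * b ∧ x * a ≠ 0)

theorem stmt10 {G : Type} [Group G] (m : ℕ) (g : Fin m → G)
    (hgen : Subgroup.closure (Set.range g) = ⊤)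
    (C : Subgroup G) [C.Normal] (habel : ∀ x ∈ C, ∀ y ∈ C, x * y = y * x)
    (hC : C ≠ ⊤)
    (hOre : IsOreDomain (MonoidAlgebra ℤ (G ⧸ C)))
    (hTF : ConjTorsionFree C)
    (D : Type) [AddCommGroup D] [Module (MonoidAlgebra ℤ (G ⧸ C))ᵐᵒᵖ D]
    (d : G → D) (σ : D →ₗ[(MonoidAlgebra ℤ (G ⧸ C))ᵐᵒᵖ] MonoidAlgebra ℤ (G ⧸ C))
    (hsplit : IsMatrixSplitting C d σ) :
    ∃ n : ℕ, (n : Cardinal) = Module.rank (MonoidAlgebra ℤ (G ⧸ C))ᵐᵒᵖ D ∧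
      ∃ (β : G →* G ⧸ C) (t : G → (Fin n → MonoidAlgebra ℤ (G ⧸ C))),
        (∀ x y : G, t (x * y) =
          MulOpposite.op (MonoidAlgebra.of ℤ (G ⧸ C) (β y)) • t x + t y) ∧
        Function.Injective (fun x : G => (β x, t x)) := by

  classical
  obtain ⟨hinj, hcoc, hspan, hσd, hσrange, hker⟩ := hsplit
  obtain ⟨hdom, horeR, horeL⟩ := hOre
  -- basic facts about d
  have hd1 : d 1 = 0 := by
    have h := hcoc 1 1
    simp only [mul_one, QuotientGroup.mk_one, map_one, MulOpposite.op_one, one_smul] at h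
    exact (left_eq_add.mp h)
  have hsmul_cancel : ∀ (u : G ⧸ C) (z : D),
      MulOpposite.op (MonoidAlgebra.of ℤ (G ⧸ C) u⁻¹) •
        (MulOpposite.op (MonoidAlgebra.of ℤ (G ⧸ C) u) • z) = z := by
    intro u z
    rw [smul_smul, ← MulOpposite.op_mul, ← map_mul, mul_inv_cancel, map_one,
      MulOpposite.op_one, one_smul]
  have hdinv_mem : ∀ (x : G) (W : Submodule (MonoidAlgebra ℤ (G ⧸ C))ᵐᵒᵖ D),
      d x ∈ W → d x⁻¹ ∈ W := by
    intro x W hx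
    have h := hcoc x⁻¹ x
    rw [inv_mul_cancel, hd1] at h
    have h2 : MulOpposite.op (MonoidAlgebra.of ℤ (G ⧸ C) ((x : G ⧸ C))) • d x⁻¹ = -(d x) :=
      eq_neg_of_add_eq_zero_left h.symm
    have h3 : d x⁻¹ = MulOpposite.op (MonoidAlgebra.of ℤ (G ⧸ C) ((x : G ⧸ C))⁻¹) • (-(d x)) := by
      rw [← h2, hsmul_cancel]
    rw [h3]
    exact Submodule.smul_mem _ _ (Submodule.neg_mem _ hx)
  -- the generators span
  have hspan' : Submodule.span (MonoidAlgebra ℤ (G ⧸ C))ᵐᵒᵖ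
      (Set.range fun k => d (g k)) = ⊤ := by
    set W := Submodule.span (MonoidAlgebra ℤ (G ⧸ C))ᵐᵒᵖ (Set.range fun k => d (g k)) with hW
    rw [eq_top_iff, ← hspan, Submodule.span_le]
    rintro _ ⟨x, rfl⟩
    have hx : x ∈ Subgroup.closure (Set.range g) := by rw [hgen]; trivial
    have hmain : d x ∈ W ∧ d x⁻¹ ∈ W := by
      induction hx using Subgroup.closure_induction with
      | mem z hz =>
        obtain ⟨k, rfl⟩ := hz
        exact ⟨Submodule.subset_span ⟨k, rfl⟩, hdinv_mem _ _ (Submodule.subset_span ⟨k, rfl⟩)⟩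
      | one =>
        rw [inv_one]
        exact ⟨by rw [hd1]; exact W.zero_mem, by rw [hd1]; exact W.zero_mem⟩
      | mul a b ha hb iha ihb =>
        refine ⟨?_, ?_⟩
        · rw [hcoc a b]; exact W.add_mem (W.smul_mem _ iha.1) ihb.1
        · rw [mul_inv_rev, hcoc b⁻¹ a⁻¹]; exact W.add_mem (W.smul_mem _ ihb.2) iha.2
      | inv a ha iha =>
        exact ⟨iha.2, by rw [inv_inv]; exact iha.1⟩
    exact hmain.1
  -- facts about d on C
  have hmk_one : ∀ c' ∈ C, ((c' : G) : G ⧸ C) = 1 := fun c' hc' =>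
    (QuotientGroup.eq_one_iff c').mpr hc'
  have hdC_add : ∀ (x : G), ∀ c' ∈ C, d (x * c') = d x + d c' := by
    intro x c' hc'
    rw [hcoc x c', hmk_one c' hc', map_one, MulOpposite.op_one, one_smul]
  have hdC_inv : ∀ c' ∈ C, d c'⁻¹ = -d c' := by
    intro c' hc'
    have h := hcoc c'⁻¹ c'
    rw [inv_mul_cancel, hd1, hmk_one c' hc', map_one, MulOpposite.op_one, one_smul] at h
    exact eq_neg_of_add_eq_zero_left h.symm
  have hdC_pow : ∀ c' ∈ C, ∀ k : ℕ, d (c' ^ k) = k • d c' := by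
    intro c' hc' k
    induction k with
    | zero => simpa using hd1
    | succ k ih => rw [pow_succ, hdC_add _ c' hc', ih, add_smul, one_smul]
  have hdC_zpow : ∀ c' ∈ C, ∀ z : ℤ, d (c' ^ z) = z • d c' := by
    intro c' hc' z
    cases z with
    | ofNat k => simpa using hdC_pow c' hc' k
    | negSucc k =>
      rw [zpow_negSucc, hdC_inv _ (pow_mem hc' _), hdC_pow c' hc' (k + 1), negSucc_zsmul]
  have hconj : ∀ c' ∈ C, ∀ u : G,
      MulOpposite.op (MonoidAlgebra.of ℤ (G ⧸ C) ((u : G ⧸ C))) • d c' = d (u⁻¹ * c' * u) := by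
    intro c' hc' u
    have h1 := hcoc c' u
    have h2 := hcoc u⁻¹ (c' * u)
    have h3 : ((c' * u : G) : G ⧸ C) = ((u : G ⧸ C)) := by
      rw [QuotientGroup.mk_mul, hmk_one c' hc', one_mul]
    have h4 := hcoc u⁻¹ u
    rw [inv_mul_cancel, hd1] at h4
    have h5 : MulOpposite.op (MonoidAlgebra.of ℤ (G ⧸ C) ((u : G ⧸ C))) • d u⁻¹ = -(d u) :=
      eq_neg_of_add_eq_zero_left h4.symm
    rw [mul_assoc, h2, h3, h1, h5]
    abel
  have hd_inj1 : ∀ x : G, x ∈ C → d x = 0 → x = 1 := by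
    intro x hx hdx
    apply hinj
    show ((x : G ⧸ C), d x) = (((1 : G) : G ⧸ C), d 1)
    rw [hdx, hd1, hmk_one x hx, QuotientGroup.mk_one]
  have hlist : ∀ L : List G, (∀ x ∈ L, x ∈ C) → L.prod ∈ C ∧ d L.prod = (L.map d).sum := by
    intro L
    induction L with
    | nil => exact fun _ => ⟨by simpa using C.one_mem, by simpa using hd1⟩
    | cons a L ih =>
      intro hmem
      have haC : a ∈ C := hmem a List.mem_cons_self
      obtain ⟨hpC, hdp⟩ := ih fun x hx => hmem x (List.mem_cons_of_mem _ hx)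
      constructor
      · rw [List.prod_cons]; exact C.mul_mem haC hpC
      · rw [List.prod_cons, List.map_cons, List.sum_cons, hcoc a L.prod,
          hmk_one _ hpC, map_one, MulOpposite.op_one, one_smul, hdp]
  -- torsion-freeness of D
  have htf : ∀ (a : (MonoidAlgebra ℤ (G ⧸ C))ᵐᵒᵖ) (x : D), a ≠ 0 → a • x = 0 → x = 0 := by
    intro a x ha hax
    have hσ0 : σ x = 0 := by
      have h1 := map_smul σ a x
      rw [hax, map_zero] at h1
      have h2 : σ x * a.unop = 0 := by
        rw [← MulOpposite.smul_eq_mul_unop]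
        exact h1.symm
      rcases hdom _ _ h2 with h | h
      · exact h
      · exact absurd (MulOpposite.unop_injective
          (h.trans MulOpposite.unop_zero.symm)) ha
    obtain ⟨c, hcC, hdc⟩ := (hker x).mp hσ0
    subst hdc
    set r := a.unop with hr
    have hr0 : r ≠ 0 := fun h => ha (MulOpposite.unop_injective
      (h.trans MulOpposite.unop_zero.symm))
    set l := r.coeff.support.toList with hl
    have hnd : l.Nodup := Finset.nodup_toList _
    have hlen : 0 < l.length := by
      rw [hl, Finset.length_toList, Finset.card_pos]
      exact Finsupp.support_nonempty_iff.mpr (fun h => hr0 (MonoidAlgebra.coeff_eq_zero.mp h))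
    set hh : Fin l.length → G := fun jj => (l.get jj).out with hhh
    set mm : Fin l.length → ℤ := fun jj => r.coeff (l.get jj) with hmm
    have hout : ∀ jj, ((hh jj : G) : G ⧸ C) = l.get jj := fun jj => QuotientGroup.out_eq' _
    have hconjC : ∀ jj : Fin l.length, (hh jj)⁻¹ * c * hh jj ∈ C := by
      intro jj
      have := (‹C.Normal› : C.Normal).conj_mem c hcC (hh jj)⁻¹
      simpa [inv_inv] using this
    have hfacts : ∀ x ∈ (List.ofFn fun jj => ((hh jj)⁻¹ * c * hh jj) ^ mm jj), x ∈ C := by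
      intro x hx
      obtain ⟨jj, rfl⟩ := List.mem_ofFn.mp hx
      exact Subgroup.zpow_mem _ (hconjC jj) _
    obtain ⟨hPC, hdP⟩ := hlist _ hfacts
    have hsum_list : ∀ (F : (G ⧸ C) → D),
        ∑ jj : Fin l.length, F (l.get jj) = ∑ b ∈ r.coeff.support, F b := by
      intro F
      conv_rhs => rw [← Finset.sum_map_toList, ← hl, ← List.ofFn_get l, List.map_ofFn,
        List.sum_ofFn]
      rfl
    have ha' : a = ∑ b ∈ r.coeff.support, (r.coeff b) •
        MulOpposite.op (MonoidAlgebra.of ℤ (G ⧸ C) b) := by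
      have hsingle : ∀ b, (r.coeff b) • MulOpposite.op (MonoidAlgebra.of ℤ (G ⧸ C) b)
          = MulOpposite.op (MonoidAlgebra.single b (r.coeff b)) := by
        intro b
        rw [← MulOpposite.op_smul, MonoidAlgebra.of_apply]
        congr 1
        rw [MonoidAlgebra.smul_single', mul_one]
      rw [Finset.sum_congr rfl fun b _ => hsingle b]
      have h7 : ∑ b ∈ r.coeff.support, MulOpposite.op (MonoidAlgebra.single b (r.coeff b))
          = MulOpposite.op (∑ b ∈ r.coeff.support, MonoidAlgebra.single b (r.coeff b)) :=
        (map_sum (MulOpposite.opAddEquiv (α := MonoidAlgebra ℤ (G ⧸ C))) _ _).symm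
      have h8 : ∑ b ∈ r.coeff.support, MonoidAlgebra.single b (r.coeff b) = r := by
        conv_rhs => rw [← MonoidAlgebra.sum_coeff_single r]
        rfl
      rw [h7, h8]
      exact (MulOpposite.op_unop a).symm
    have hadc : a • d c = ∑ jj : Fin l.length,
        mm jj • (MulOpposite.op (MonoidAlgebra.of ℤ (G ⧸ C) (l.get jj)) • d c) := by
      conv_lhs => rw [ha', Finset.sum_smul]
      rw [Finset.sum_congr rfl fun b _ => smul_assoc (r.coeff b)
          (MulOpposite.op (MonoidAlgebra.of ℤ (G ⧸ C) b)) (d c),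
        ← hsum_list fun b => (r.coeff b) • (MulOpposite.op (MonoidAlgebra.of ℤ (G ⧸ C) b) • d c)]
    have hdP2 : d (List.ofFn fun jj => ((hh jj)⁻¹ * c * hh jj) ^ mm jj).prod = a • d c := by
      rw [hdP, List.map_ofFn, List.sum_ofFn, hadc]
      refine Finset.sum_congr rfl fun jj _ => ?_
      show d ((((hh jj)⁻¹ * c * hh jj)) ^ mm jj) = _
      rw [hdC_zpow _ (hconjC jj) (mm jj), ← hout jj, hconj c hcC (hh jj)]
    have hP1 : (List.ofFn fun jj => ((hh jj)⁻¹ * c * hh jj) ^ mm jj).prod = 1 := by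
      apply hd_inj1 _ hPC
      rw [hdP2, hax]
    have hdist : ∀ jj ll : Fin l.length, jj ≠ ll → (hh jj)⁻¹ * hh ll ∉ C := by
      intro jj ll hne hmem
      apply hne
      have h1 : ((hh jj : G) : G ⧸ C) = ((hh ll : G) : G ⧸ C) := QuotientGroup.eq.mpr hmem
      rw [hout jj, hout ll] at h1
      exact List.nodup_iff_injective_get.mp hnd h1
    have hex : ∃ jj : Fin l.length, mm jj ≠ 0 := by
      refine ⟨⟨0, hlen⟩, ?_⟩
      exact Finsupp.mem_support_iff.mp (Finset.mem_toList.mp (List.get_mem l ⟨0, hlen⟩))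
    have hc1 : c = 1 := hTF c hcC l.length hh mm hdist hex hP1
    rw [hc1, hd1]
  -- Ore conditions in the opposite ring
  haveI : NoZeroDivisors (MonoidAlgebra ℤ (G ⧸ C))ᵐᵒᵖ := by
    constructor
    intro a b h
    have h2 : b.unop * a.unop = 0 := by rw [← MulOpposite.unop_mul, h, MulOpposite.unop_zero]
    rcases hdom _ _ h2 with h3 | h3
    · exact Or.inr (MulOpposite.unop_injective (h3.trans MulOpposite.unop_zero.symm))
    · exact Or.inl (MulOpposite.unop_injective (h3.trans MulOpposite.unop_zero.symm))
  have hu0 : ∀ a : (MonoidAlgebra ℤ (G ⧸ C))ᵐᵒᵖ, a ≠ 0 → a.unop ≠ 0 := by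
    intro a ha h
    exact ha (MulOpposite.unop_injective (h.trans MulOpposite.unop_zero.symm))
  have oreL' : ∀ a b : (MonoidAlgebra ℤ (G ⧸ C))ᵐᵒᵖ, a ≠ 0 → b ≠ 0 →
      ∃ x y, x * a = y * b ∧ x * a ≠ 0 := by
    intro a b ha hb
    obtain ⟨x, y, hxy, hne⟩ := horeR a.unop b.unop (hu0 a ha) (hu0 b hb)
    refine ⟨MulOpposite.op x, MulOpposite.op y, ?_, ?_⟩
    · have e1 : MulOpposite.op x * a = MulOpposite.op (a.unop * x) := by
        rw [MulOpposite.op_mul, MulOpposite.op_unop]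
      have e2 : MulOpposite.op y * b = MulOpposite.op (b.unop * y) := by
        rw [MulOpposite.op_mul, MulOpposite.op_unop]
      rw [e1, e2, hxy]
    · have e1 : MulOpposite.op x * a = MulOpposite.op (a.unop * x) := by
        rw [MulOpposite.op_mul, MulOpposite.op_unop]
      rw [e1]
      intro h
      exact hne (MulOpposite.op_injective (h.trans MulOpposite.op_zero.symm))
  have oreR' : ∀ a b : (MonoidAlgebra ℤ (G ⧸ C))ᵐᵒᵖ, a ≠ 0 → b ≠ 0 →
      ∃ x y, a * x = b * y ∧ a * x ≠ 0 := by
    intro a b ha hb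
    obtain ⟨x, y, hxy, hne⟩ := horeL a.unop b.unop (hu0 a ha) (hu0 b hb)
    refine ⟨MulOpposite.op x, MulOpposite.op y, ?_, ?_⟩
    · have e1 : a * MulOpposite.op x = MulOpposite.op (x * a.unop) := by
        rw [MulOpposite.op_mul, MulOpposite.op_unop]
      have e2 : b * MulOpposite.op y = MulOpposite.op (y * b.unop) := by
        rw [MulOpposite.op_mul, MulOpposite.op_unop]
      rw [e1, e2, hxy]
    · have e1 : a * MulOpposite.op x = MulOpposite.op (x * a.unop) := by
        rw [MulOpposite.op_mul, MulOpposite.op_unop]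
      rw [e1]
      intro h
      exact hne (MulOpposite.op_injective (h.trans MulOpposite.op_zero.symm))
  obtain ⟨n, hrank, ι, hadd, hsmul, hinj2⟩ := aux_embed oreL' oreR' htf
    (fun k => d (g k)) hspan'
  refine ⟨n, hrank, QuotientGroup.mk' C, fun x i => (ι (d x) i).unop, ?_, ?_⟩
  · intro x y
    funext i
    show (ι (d (x * y)) i).unop = _
    rw [hcoc x y, hadd, Pi.add_apply, hsmul]
    simp only [Pi.add_apply, Pi.smul_apply, MulOpposite.smul_eq_mul_unop,
      MulOpposite.unop_add, MulOpposite.unop_mul, MulOpposite.unop_op,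
      QuotientGroup.mk'_apply]
  · intro x y hxy
    have hpair := Prod.ext_iff.mp hxy
    have hβ : (x : G ⧸ C) = (y : G ⧸ C) := hpair.1
    have hι : ι (d x) = ι (d y) := by
      funext i
      exact MulOpposite.unop_injective (congrFun hpair.2 i)
    have hd : d x = d y := hinj2 hι
    apply hinj
    show ((x : G ⧸ C), d x) = ((y : G ⧸ C), d y)
    rw [hβ, hd]
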